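/- arXiv:1505.03744 — 4 statements merged into one kernel-verified Lean document; each statement's English description precedes it below -/
import Mathlib

section
/- For every a > 0 and every φ′ with |φ′| < δ/2, the limit as ε → 0⁺ of ∫_{−δ/2}^{δ/2} (a²(φ−φ′)² − 2εa)/(a²(φ−φ′)² + ε²) dφ equals δ − 2π. -/
open MeasureTheory Real Filter

/-- For `a > 0` and `|φ′| < δ/2`, the limit as `ε → 0⁺` of
`∫_{−δ/2}^{δ/2} (a²(φ−φ′)² − 2εa)/(a²(φ−φ′)² + ε²) dφ` equals `δ − 2π`. -/
theorem stmt1 (δ a φ' : ℝ) (hδ : 0 < δ) (ha : 0 < a) (hφ' : |φ'| < δ / 2) :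
    Tendsto (fun ε : ℝ => ∫ φ in (-δ/2)..(δ/2),
        (a ^ 2 * (φ - φ') ^ 2 - 2 * ε * a) / (a ^ 2 * (φ - φ') ^ 2 + ε ^ 2))
      (nhdsWithin 0 (Set.Ioi 0)) (nhds (δ - 2 * Real.pi)) := by
  obtain ⟨h1, h2⟩ := abs_lt.mp hφ'
  have hc1 : 0 < a * (δ/2 - φ') := by nlinarith
  have hc2 : 0 < a * (δ/2 + φ') := by nlinarith
  have key : ∀ ε : ℝ, ε ∈ Set.Ioi (0:ℝ) →
      (∫ φ in (-δ/2)..(δ/2),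
        (a ^ 2 * (φ - φ') ^ 2 - 2 * ε * a) / (a ^ 2 * (φ - φ') ^ 2 + ε ^ 2))
      = δ - ((ε + 2*a)/a) *
          (Real.arctan (a*(δ/2 - φ')/ε) + Real.arctan (a*(δ/2 + φ')/ε)) := by
    intro ε hε
    have hε' : (0:ℝ) < ε := hε
    have hεne : ε ≠ 0 := ne_of_gt hε'
    have hane : a ≠ 0 := ne_of_gt ha
    have hder : ∀ φ ∈ Set.uIcc (-δ/2) (δ/2),
        HasDerivAt (fun φ => φ - ((ε + 2*a)/a) * Real.arctan (a*(φ - φ')/ε))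
          ((a ^ 2 * (φ - φ') ^ 2 - 2 * ε * a) / (a ^ 2 * (φ - φ') ^ 2 + ε ^ 2)) φ := by
      intro φ _
      have hin : HasDerivAt (fun φ : ℝ => a*(φ - φ')/ε) (a/ε) φ := by
        have := ((hasDerivAt_id φ).sub_const φ').const_mul a
        simpa using this.div_const ε
      have harc := (Real.hasDerivAt_arctan (a*(φ - φ')/ε)).comp φ hin
      have h := ((hasDerivAt_id φ).sub ((harc.const_mul ((ε + 2*a)/a))))
      refine h.congr_deriv ?_
      have hden : a ^ 2 * (φ - φ') ^ 2 + ε ^ 2 > 0 := by positivity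
      field_simp
      ring
    have hcont : IntervalIntegrable
        (fun φ => (a ^ 2 * (φ - φ') ^ 2 - 2 * ε * a) / (a ^ 2 * (φ - φ') ^ 2 + ε ^ 2))
        volume (-δ/2) (δ/2) := by
      apply Continuous.intervalIntegrable
      apply Continuous.div (by continuity) (by continuity)
      intro x
      positivity
    rw [intervalIntegral.integral_eq_sub_of_hasDerivAt hder hcont]
    have : a*(-δ/2 - φ')/ε = -(a*(δ/2 + φ')/ε) := by ring
    rw [this, Real.arctan_neg]
    ring
  have main : Tendsto (fun ε : ℝ => δ - ((ε + 2*a)/a) *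
      (Real.arctan (a*(δ/2 - φ')/ε) + Real.arctan (a*(δ/2 + φ')/ε)))
      (nhdsWithin 0 (Set.Ioi 0)) (nhds (δ - 2 * Real.pi)) := by
    have hquot : Tendsto (fun ε : ℝ => (ε + 2*a)/a) (nhdsWithin 0 (Set.Ioi 0)) (nhds 2) := by
      have : Tendsto (fun ε : ℝ => (ε + 2*a)/a) (nhds 0) (nhds ((0 + 2*a)/a)) := by
        apply Tendsto.div_const
        exact (continuous_id.add continuous_const).tendsto 0
      have h2 : (0 + 2*a)/a = 2 := by field_simp; ring
      rw [h2] at this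
      exact this.mono_left nhdsWithin_le_nhds
    have harctan : ∀ c : ℝ, 0 < c →
        Tendsto (fun ε : ℝ => Real.arctan (c/ε)) (nhdsWithin 0 (Set.Ioi 0)) (nhds (π/2)) := by
      intro c hc
      have h1 : Tendsto (fun ε : ℝ => c/ε) (nhdsWithin 0 (Set.Ioi 0)) atTop := by
        simpa [div_eq_mul_inv] using tendsto_inv_nhdsGT_zero.const_mul_atTop hc
      exact (tendsto_nhds_of_tendsto_nhdsWithin Real.tendsto_arctan_atTop).comp h1
    have hsum := (harctan _ hc1).add (harctan _ hc2)
    have hmul := hquot.mul hsum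
    have hfin := (tendsto_const_nhds (x := δ) (f := nhdsWithin (0:ℝ) (Set.Ioi 0))).sub hmul
    have : δ - 2 * (π/2 + π/2) = δ - 2 * Real.pi := by ring
    rw [this] at hfin
    exact hfin
  exact main.congr' (eventually_nhdsWithin_of_forall fun ε hε => (key ε hε).symm)
end

section
/- For every a > 0 and every φ′ with |φ′| < δ/2, the limit as ε → 0⁻ (ε negative tending to 0) of ∫_{−δ/2}^{δ/2} (a²(φ−φ′)² − 2εa)/(a²(φ−φ′)² + ε²) dφ equals δ + 2π. -/
open MeasureTheory Real Filter

/-- For `a > 0` and `|φ′| < δ/2`, the limit as `ε → 0⁻` of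
`∫_{−δ/2}^{δ/2} (a²(φ−φ′)² − 2εa)/(a²(φ−φ′)² + ε²) dφ` equals `δ + 2π`. -/
theorem stmt2 (δ a φ' : ℝ) (hδ : 0 < δ) (ha : 0 < a) (hφ' : |φ'| < δ / 2) :
    Tendsto (fun ε : ℝ => ∫ φ in (-δ/2)..(δ/2),
        (a ^ 2 * (φ - φ') ^ 2 - 2 * ε * a) / (a ^ 2 * (φ - φ') ^ 2 + ε ^ 2))
      (nhdsWithin 0 (Set.Iio 0)) (nhds (δ + 2 * Real.pi)) := by
  obtain ⟨hm, hp⟩ := abs_lt.mp hφ'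
  have ha' : a ≠ 0 := ne_of_gt ha
  -- closed form of the integral for ε < 0
  have hEq : ∀ ε : ℝ, ε < 0 →
      (∫ φ in (-δ/2)..(δ/2),
        (a ^ 2 * (φ - φ') ^ 2 - 2 * ε * a) / (a ^ 2 * (φ - φ') ^ 2 + ε ^ 2))
      = δ + ((ε + 2*a)/a) *
          (Real.arctan ((a/(-ε)) * (δ/2 - φ')) - Real.arctan ((a/(-ε)) * (-δ/2 - φ'))) := by
    intro ε hε
    have hεne : ε ≠ 0 := ne_of_lt hε
    have key : ∀ φ : ℝ,
        HasDerivAt (fun x => x + ((ε + 2*a)/a) * Real.arctan ((a/(-ε)) * (x - φ')))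
          ((a ^ 2 * (φ - φ') ^ 2 - 2 * ε * a) / (a ^ 2 * (φ - φ') ^ 2 + ε ^ 2)) φ := by
      intro φ
      have h1 : HasDerivAt (fun x : ℝ => (a/(-ε)) * (x - φ')) (a/(-ε)) φ := by
        simpa using ((hasDerivAt_id φ).sub_const φ').const_mul (a/(-ε))
      have h2 := (Real.hasDerivAt_arctan ((a/(-ε)) * (φ - φ'))).comp φ h1
      have h3 := ((hasDerivAt_id φ).add (h2.const_mul ((ε + 2*a)/a)))
      refine h3.congr_deriv ?_
      have hd1 : (1 : ℝ) + ((a/(-ε)) * (φ - φ')) ^ 2 ≠ 0 := by positivity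
      have hd2 : a ^ 2 * (φ - φ') ^ 2 + ε ^ 2 ≠ 0 := by positivity
      field_simp
      ring
    have hcont : IntervalIntegrable
        (fun φ => (a ^ 2 * (φ - φ') ^ 2 - 2 * ε * a) / (a ^ 2 * (φ - φ') ^ 2 + ε ^ 2))
        volume (-δ/2) (δ/2) := by
      apply Continuous.intervalIntegrable
      apply Continuous.div (by continuity) (by continuity)
      intro φ
      positivity
    rw [intervalIntegral.integral_eq_sub_of_hasDerivAt (fun φ _ => key φ) hcont]
    ring
  -- limits
  have hneg : Tendsto (fun ε : ℝ => -ε) (nhdsWithin 0 (Set.Iio 0)) (nhdsWithin 0 (Set.Ioi 0)) := by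
    apply tendsto_nhdsWithin_of_tendsto_nhds_of_eventually_within
    · simpa using (continuous_neg.tendsto (0:ℝ)).mono_left nhdsWithin_le_nhds
    · filter_upwards [self_mem_nhdsWithin] with ε hε
      simpa using hε
  have hinv : Tendsto (fun ε : ℝ => (-ε)⁻¹) (nhdsWithin 0 (Set.Iio 0)) atTop :=
    tendsto_inv_nhdsGT_zero.comp hneg
  have harg1 : Tendsto (fun ε : ℝ => (a/(-ε)) * (δ/2 - φ')) (nhdsWithin 0 (Set.Iio 0)) atTop := by
    have hc : 0 < a * (δ/2 - φ') := by nlinarith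
    have := hinv.const_mul_atTop hc
    apply this.congr
    intro ε; field_simp
  have harg2 : Tendsto (fun ε : ℝ => (a/(-ε)) * (-δ/2 - φ')) (nhdsWithin 0 (Set.Iio 0)) atBot := by
    have hc : a * (-δ/2 - φ') < 0 := by nlinarith
    have := hinv.const_mul_atTop_of_neg hc
    apply this.congr
    intro ε; field_simp
  have hat1 : Tendsto (fun ε : ℝ => Real.arctan ((a/(-ε)) * (δ/2 - φ')))
      (nhdsWithin 0 (Set.Iio 0)) (nhds (Real.pi/2)) :=
    (Real.tendsto_arctan_atTop.mono_right nhdsWithin_le_nhds).comp harg1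
  have hat2 : Tendsto (fun ε : ℝ => Real.arctan ((a/(-ε)) * (-δ/2 - φ')))
      (nhdsWithin 0 (Set.Iio 0)) (nhds (-(Real.pi/2))) :=
    (Real.tendsto_arctan_atBot.mono_right nhdsWithin_le_nhds).comp harg2
  have hcoef : Tendsto (fun ε : ℝ => (ε + 2*a)/a) (nhdsWithin 0 (Set.Iio 0)) (nhds 2) := by
    have : Tendsto (fun ε : ℝ => (ε + 2*a)/a) (nhds 0) (nhds ((0 + 2*a)/a)) := by
      apply Tendsto.div_const
      exact (continuous_id.add continuous_const).tendsto 0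
    have h2 : (0 + 2*a)/a = 2 := by field_simp; ring
    rw [h2] at this
    exact this.mono_left nhdsWithin_le_nhds
  have hG : Tendsto (fun ε : ℝ => δ + ((ε + 2*a)/a) *
      (Real.arctan ((a/(-ε)) * (δ/2 - φ')) - Real.arctan ((a/(-ε)) * (-δ/2 - φ'))))
      (nhdsWithin 0 (Set.Iio 0)) (nhds (δ + 2 * Real.pi)) := by
    have := (tendsto_const_nhds (x := δ) (f := nhdsWithin (0:ℝ) (Set.Iio 0))).add (hcoef.mul (hat1.sub hat2))
    have h2 : δ + 2 * (Real.pi/2 - -(Real.pi/2)) = δ + 2 * Real.pi := by ring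
    rw [h2] at this
    exact this
  apply hG.congr'
  filter_upwards [self_mem_nhdsWithin] with ε hε
  exact (hEq ε hε).symm
end

section
/- For a > 0, as z′ → 0⁺ the function z′ ↦ ∫_{0}^{π} dθ/√(2a²(1−cos θ) + z′²) + (1/a)·ln(z′/(8a)) remains bounded (in fact extends continuously to z′ = 0 with limit 0), so the combined integrand in the MoM self-term is integrable on (0, δ/2]. -/
open MeasureTheory Real Filter

namespace Stmt10

/-- half-angle: `2a²(1-cos θ) = (2a sin(θ/2))²`. -/
lemma R_eq (a z' θ : ℝ) :
    2 * a ^ 2 * (1 - Real.cos θ) + z' ^ 2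
      = (2 * a * Real.sin (θ / 2)) ^ 2 + z' ^ 2 := by
  have h1 : Real.cos θ = 2 * Real.cos (θ / 2) ^ 2 - 1 := by
    have := Real.cos_two_mul (θ / 2)
    rw [show 2 * (θ / 2) = θ by ring] at this
    linarith
  have h2 := Real.sin_sq_add_cos_sq (θ / 2)
  nlinarith

lemma R_pos {a z' : ℝ} (hz : 0 < z') (θ : ℝ) :
    0 < 2 * a ^ 2 * (1 - Real.cos θ) + z' ^ 2 := by
  rw [R_eq]
  nlinarith [sq_nonneg (2 * a * Real.sin (θ / 2))]

lemma sqrtR_pos {a z' : ℝ} (hz : 0 < z') (θ : ℝ) :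
    0 < Real.sqrt (2 * a ^ 2 * (1 - Real.cos θ) + z' ^ 2) :=
  Real.sqrt_pos.mpr (R_pos hz θ)

lemma cont_sqrtR (a z' : ℝ) :
    Continuous fun θ : ℝ => Real.sqrt (2 * a ^ 2 * (1 - Real.cos θ) + z' ^ 2) := by
  fun_prop

/-- integrability of `h θ / √R` for continuous `h`, `z' > 0`. -/
lemma intgr {a z' : ℝ} (hz : 0 < z') {h : ℝ → ℝ} (hh : Continuous h) :
    IntervalIntegrable
      (fun θ => h θ / Real.sqrt (2 * a ^ 2 * (1 - Real.cos θ) + z' ^ 2))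
      volume 0 Real.pi :=
  (hh.div (cont_sqrtR a z') (fun θ => (sqrtR_pos hz θ).ne')).intervalIntegrable 0 Real.pi

/-- FTC evaluation of the `cos(θ/2)` piece. -/
lemma J_eq {a z' : ℝ} (ha : 0 < a) (hz : 0 < z') :
    (∫ θ in (0:ℝ)..Real.pi,
        Real.cos (θ / 2) / Real.sqrt (2 * a ^ 2 * (1 - Real.cos θ) + z' ^ 2))
      = (1 / a) * Real.arsinh (2 * a / z') := by
  have key : ∀ θ ∈ Set.uIcc (0:ℝ) Real.pi,
      HasDerivAt (fun t => (1 / a) * Real.arsinh (2 * a * Real.sin (t / 2) / z'))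
        (Real.cos (θ / 2) / Real.sqrt (2 * a ^ 2 * (1 - Real.cos θ) + z' ^ 2)) θ := by
    intro θ _
    have hinner : HasDerivAt (fun t : ℝ => 2 * a * Real.sin (t / 2) / z')
        (2 * a * (Real.cos (θ / 2) * (1 / 2)) / z') θ := by
      have h1 : HasDerivAt (fun t : ℝ => t / 2) (1 / 2) θ := by
        simpa using (hasDerivAt_id θ).div_const 2
      have h2 : HasDerivAt (fun t : ℝ => Real.sin (t / 2))
          (Real.cos (θ / 2) * (1 / 2)) θ := h1.sin
      exact (h2.const_mul (2 * a)).div_const z'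
    have harsinh := (Real.hasDerivAt_arsinh (2 * a * Real.sin (θ / 2) / z')).comp θ hinner
    have hfin := harsinh.const_mul (1 / a)
    refine hfin.congr_deriv ?_
    have hexp : 1 + (2 * a * Real.sin (θ / 2) / z') ^ 2
        = ((2 * a * Real.sin (θ / 2)) ^ 2 + z' ^ 2) / z' ^ 2 := by
      field_simp; ring
    have hsqrt : Real.sqrt (1 + (2 * a * Real.sin (θ / 2) / z') ^ 2)
        = Real.sqrt ((2 * a * Real.sin (θ / 2)) ^ 2 + z' ^ 2) / z' := by
      rw [hexp, Real.sqrt_div (by positivity), Real.sqrt_sq hz.le]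
    rw [R_eq, hsqrt]
    have hspos : 0 < Real.sqrt ((2 * a * Real.sin (θ / 2)) ^ 2 + z' ^ 2) := by
      have : (0:ℝ) < (2 * a * Real.sin (θ / 2)) ^ 2 + z' ^ 2 := by positivity
      exact Real.sqrt_pos.mpr this
    field_simp
  rw [intervalIntegral.integral_eq_sub_of_hasDerivAt key (intgr hz (by fun_prop))]
  norm_num [Real.sin_pi_div_two]

/-- FTC evaluation of the limit integral `∫₀^π tan(θ/4)/(2a) dθ = (1/a) log 2`. -/
lemma limit_integral {a : ℝ} (ha : 0 < a) :
    (∫ θ in (0:ℝ)..Real.pi, Real.tan (θ / 4) / (2 * a)) = (1 / a) * Real.log 2 := by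
  have hcos : ∀ θ ∈ Set.uIcc (0:ℝ) Real.pi, 0 < Real.cos (θ / 4) := by
    intro θ hθ
    rw [Set.uIcc_of_le Real.pi_pos.le] at hθ
    apply Real.cos_pos_of_mem_Ioo
    constructor
    · nlinarith [hθ.1, Real.pi_pos]
    · nlinarith [hθ.2, Real.pi_pos]
  have key : ∀ θ ∈ Set.uIcc (0:ℝ) Real.pi,
      HasDerivAt (fun t => -(2 / a) * Real.log (Real.cos (t / 4)))
        (Real.tan (θ / 4) / (2 * a)) θ := by
    intro θ hθ
    have h1 : HasDerivAt (fun t : ℝ => t / 4) (1 / 4) θ := by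
      simpa using (hasDerivAt_id θ).div_const 4
    have h2 : HasDerivAt (fun t : ℝ => Real.cos (t / 4))
        (-Real.sin (θ / 4) * (1 / 4)) θ := h1.cos
    have h3 := (h2.log (hcos θ hθ).ne')
    have h4 := h3.const_mul (-(2 / a))
    refine h4.congr_deriv ?_
    rw [Real.tan_eq_sin_div_cos]
    field_simp
    ring
  have hcont : IntervalIntegrable (fun θ => Real.tan (θ / 4) / (2 * a))
      volume 0 Real.pi := by
    apply ContinuousOn.intervalIntegrable
    have hc : ContinuousOn (fun θ : ℝ => Real.sin (θ / 4) / Real.cos (θ / 4) / (2 * a))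
        (Set.uIcc 0 Real.pi) := by
      apply ContinuousOn.div_const
      exact ContinuousOn.div (by fun_prop) (by fun_prop) (fun θ hθ => (hcos θ hθ).ne')
    exact hc.congr (fun θ hθ => by rw [Real.tan_eq_sin_div_cos])
  rw [intervalIntegral.integral_eq_sub_of_hasDerivAt key hcont]
  have hlog : Real.log (Real.sqrt 2 / 2) = -(Real.log 2 / 2) := by
    rw [Real.log_div (by positivity) (by norm_num), Real.log_sqrt (by norm_num)]
    ring
  norm_num [Real.cos_pi_div_four, hlog]
  ring

/-- quarter-angle identity on `(0, π]`. -/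
lemma id1 {a θ : ℝ} (ha : 0 < a) (hθ : θ ∈ Set.Ioc (0:ℝ) Real.pi) :
    (1 - Real.cos (θ / 2)) / (2 * a * Real.sin (θ / 2)) = Real.tan (θ / 4) / (2 * a) := by
  have hπ := Real.pi_pos
  have hs4 : 0 < Real.sin (θ / 4) :=
    Real.sin_pos_of_pos_of_lt_pi (by linarith [hθ.1]) (by nlinarith [hθ.2])
  have hc4 : 0 < Real.cos (θ / 4) :=
    Real.cos_pos_of_mem_Ioo ⟨by nlinarith [hθ.1], by nlinarith [hθ.2]⟩
  have hcos2 : Real.cos (θ / 2) = 1 - 2 * Real.sin (θ / 4) ^ 2 := by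
    have h := Real.cos_two_mul (θ / 4)
    rw [show 2 * (θ / 4) = θ / 2 by ring] at h
    nlinarith [Real.sin_sq_add_cos_sq (θ / 4)]
  have hsin2 : Real.sin (θ / 2) = 2 * Real.sin (θ / 4) * Real.cos (θ / 4) := by
    have h := Real.sin_two_mul (θ / 4)
    rw [show 2 * (θ / 4) = θ / 2 by ring] at h
    linarith
  rw [Real.tan_eq_sin_div_cos, hcos2, hsin2]
  field_simp
  ring

lemma sin_half_pos {θ : ℝ} (hθ : θ ∈ Set.Ioc (0:ℝ) Real.pi) : 0 < Real.sin (θ / 2) :=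
  Real.sin_pos_of_pos_of_lt_pi (by linarith [hθ.1]) (by nlinarith [hθ.2, Real.pi_pos])

lemma bound_le {a z' θ : ℝ} (ha : 0 < a) (hz : 0 < z') (hθ : θ ∈ Set.Ioc (0:ℝ) Real.pi) :
    ‖(1 - Real.cos (θ / 2)) / Real.sqrt (2 * a ^ 2 * (1 - Real.cos θ) + z' ^ 2)‖
      ≤ Real.tan (θ / 4) / (2 * a) := by
  have hs := sin_half_pos hθ
  have hnum : 0 ≤ 1 - Real.cos (θ / 2) := by nlinarith [Real.cos_le_one (θ / 2)]
  have hR : 2 * a * Real.sin (θ / 2)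
      ≤ Real.sqrt (2 * a ^ 2 * (1 - Real.cos θ) + z' ^ 2) := by
    rw [R_eq]
    calc 2 * a * Real.sin (θ / 2)
        = Real.sqrt ((2 * a * Real.sin (θ / 2)) ^ 2) := (Real.sqrt_sq (by positivity)).symm
      _ ≤ _ := Real.sqrt_le_sqrt (by nlinarith)
  rw [Real.norm_eq_abs, abs_of_nonneg (by positivity), ← id1 ha hθ]
  gcongr

lemma limit_pt {a θ : ℝ} (ha : 0 < a) (hθ : θ ∈ Set.Ioc (0:ℝ) Real.pi) :
    Tendsto (fun z' : ℝ =>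
        (1 - Real.cos (θ / 2)) / Real.sqrt (2 * a ^ 2 * (1 - Real.cos θ) + z' ^ 2))
      (nhdsWithin 0 (Set.Ioi 0)) (nhds (Real.tan (θ / 4) / (2 * a))) := by
  have hs := sin_half_pos hθ
  have hval : (1 - Real.cos (θ / 2))
      / Real.sqrt (2 * a ^ 2 * (1 - Real.cos θ) + (0:ℝ) ^ 2)
      = Real.tan (θ / 4) / (2 * a) := by
    rw [R_eq]
    rw [show (2 * a * Real.sin (θ / 2)) ^ 2 + (0:ℝ) ^ 2
      = (2 * a * Real.sin (θ / 2)) ^ 2 by ring]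
    rw [Real.sqrt_sq (by positivity)]
    exact id1 ha hθ
  have hc : ContinuousAt (fun z' : ℝ =>
      (1 - Real.cos (θ / 2)) / Real.sqrt (2 * a ^ 2 * (1 - Real.cos θ) + z' ^ 2)) 0 := by
    apply ContinuousAt.div continuousAt_const (by fun_prop)
    have h0 : (0:ℝ) < 2 * a ^ 2 * (1 - Real.cos θ) + (0:ℝ) ^ 2 := by
      rw [R_eq]; norm_num; positivity
    exact (Real.sqrt_pos.mpr h0).ne'
  rw [← hval]
  exact hc.tendsto.mono_left nhdsWithin_le_nhds

lemma D_tendsto {a : ℝ} (ha : 0 < a) :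
    Tendsto (fun z' : ℝ => ∫ θ in (0:ℝ)..Real.pi,
        (1 - Real.cos (θ / 2)) / Real.sqrt (2 * a ^ 2 * (1 - Real.cos θ) + z' ^ 2))
      (nhdsWithin 0 (Set.Ioi 0)) (nhds ((1 / a) * Real.log 2)) := by
  have hπ := Real.pi_pos
  rw [← limit_integral ha]
  have hIoc : Set.uIoc (0:ℝ) Real.pi = Set.Ioc 0 Real.pi := Set.uIoc_of_le hπ.le
  apply intervalIntegral.tendsto_integral_filter_of_dominated_convergence
      (fun θ => Real.tan (θ / 4) / (2 * a))
  · filter_upwards [self_mem_nhdsWithin] with z' hz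
    refine Continuous.aestronglyMeasurable ?_ |>.restrict
    exact (by fun_prop : Continuous fun θ : ℝ => 1 - Real.cos (θ / 2)).div
      (cont_sqrtR a z') (fun θ => (sqrtR_pos hz θ).ne')
  · filter_upwards [self_mem_nhdsWithin] with z' hz
    apply ae_of_all
    intro θ hθ
    rw [hIoc] at hθ
    exact bound_le ha hz hθ
  · have hcos : ∀ θ ∈ Set.uIcc (0:ℝ) Real.pi, 0 < Real.cos (θ / 4) := by
      intro θ hθ
      rw [Set.uIcc_of_le hπ.le] at hθ
      exact Real.cos_pos_of_mem_Ioo ⟨by nlinarith [hθ.1], by nlinarith [hθ.2]⟩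
    apply ContinuousOn.intervalIntegrable
    have hc : ContinuousOn (fun θ : ℝ => Real.sin (θ / 4) / Real.cos (θ / 4) / (2 * a))
        (Set.uIcc 0 Real.pi) := by
      apply ContinuousOn.div_const
      exact ContinuousOn.div (by fun_prop) (by fun_prop) (fun θ hθ => (hcos θ hθ).ne')
    exact hc.congr (fun θ hθ => by rw [Real.tan_eq_sin_div_cos])
  · apply ae_of_all
    intro θ hθ
    rw [hIoc] at hθ
    exact limit_pt ha hθ

/-- the combined logarithmic piece. -/
lemma K_eq {a z' : ℝ} (ha : 0 < a) (hz : 0 < z') :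
    (1 / a) * Real.arsinh (2 * a / z') + (1 / a) * Real.log (z' / (8 * a))
      = (1 / a) * (Real.log (2 * a + Real.sqrt (z' ^ 2 + 4 * a ^ 2)) - Real.log (8 * a)) := by
  have hsq : Real.sqrt (1 + (2 * a / z') ^ 2) = Real.sqrt (z' ^ 2 + 4 * a ^ 2) / z' := by
    rw [show 1 + (2 * a / z') ^ 2 = (z' ^ 2 + 4 * a ^ 2) / z' ^ 2 by field_simp; ring,
      Real.sqrt_div (by positivity), Real.sqrt_sq hz.le]
  have hsp : 0 < Real.sqrt (z' ^ 2 + 4 * a ^ 2) := Real.sqrt_pos.mpr (by positivity)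
  have h1 : Real.arsinh (2 * a / z')
      = Real.log ((2 * a + Real.sqrt (z' ^ 2 + 4 * a ^ 2)) / z') := by
    rw [Real.arsinh, hsq]
    congr 1
    field_simp
  rw [h1, Real.log_div (by positivity) hz.ne', Real.log_div hz.ne' (by positivity)]
  ring

lemma K_tendsto {a : ℝ} (ha : 0 < a) :
    Tendsto (fun z' : ℝ =>
        (1 / a) * (Real.log (2 * a + Real.sqrt (z' ^ 2 + 4 * a ^ 2)) - Real.log (8 * a)))
      (nhdsWithin 0 (Set.Ioi 0)) (nhds (-((1 / a) * Real.log 2))) := by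
  have hval : (1 / a) * (Real.log (2 * a + Real.sqrt ((0:ℝ) ^ 2 + 4 * a ^ 2))
      - Real.log (8 * a)) = -((1 / a) * Real.log 2) := by
    have h1 : Real.sqrt ((0:ℝ) ^ 2 + 4 * a ^ 2) = 2 * a := by
      rw [show (0:ℝ) ^ 2 + 4 * a ^ 2 = (2 * a) ^ 2 by ring, Real.sqrt_sq (by positivity)]
    have h2 : Real.log (8 * a) = Real.log 2 + Real.log (4 * a) := by
      rw [show (8:ℝ) * a = 2 * (4 * a) by ring, Real.log_mul (by norm_num) (by positivity)]
    rw [h1, h2, show 2 * a + 2 * a = 4 * a by ring]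
    ring
  rw [← hval]
  have hc : ContinuousAt (fun z' : ℝ =>
      (1 / a) * (Real.log (2 * a + Real.sqrt (z' ^ 2 + 4 * a ^ 2)) - Real.log (8 * a))) 0 := by
    apply ContinuousAt.mul continuousAt_const
    apply ContinuousAt.sub _ continuousAt_const
    apply ContinuousAt.log (by fun_prop)
    have h1 : Real.sqrt ((0:ℝ) ^ 2 + 4 * a ^ 2) = 2 * a := by
      rw [show (0:ℝ) ^ 2 + 4 * a ^ 2 = (2 * a) ^ 2 by ring, Real.sqrt_sq (by positivity)]
    simp only [h1]
    positivity
  exact hc.tendsto.mono_left nhdsWithin_le_nhds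

end Stmt10

open Stmt10 in
/-- For `a > 0`, as `z′ → 0⁺`,
`∫₀^π dθ/√(2a²(1−cosθ)+z′²) + (1/a)ln(z′/(8a))` tends to `0`. -/
theorem stmt10 (a : ℝ) (ha : 0 < a) :
    Tendsto (fun z' : ℝ =>
        (∫ θ in (0:ℝ)..Real.pi, 1 / Real.sqrt (2 * a ^ 2 * (1 - Real.cos θ) + z' ^ 2))
          + (1 / a) * Real.log (z' / (8 * a)))
      (nhdsWithin 0 (Set.Ioi 0)) (nhds 0) := by
  have hsum := (D_tendsto ha).add (K_tendsto ha)
  rw [add_neg_cancel] at hsum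
  apply hsum.congr'
  filter_upwards [self_mem_nhdsWithin] with z' hz
  have hz : (0:ℝ) < z' := hz
  have hsplit : (∫ θ in (0:ℝ)..Real.pi,
      1 / Real.sqrt (2 * a ^ 2 * (1 - Real.cos θ) + z' ^ 2))
      = (∫ θ in (0:ℝ)..Real.pi,
          (1 - Real.cos (θ / 2)) / Real.sqrt (2 * a ^ 2 * (1 - Real.cos θ) + z' ^ 2))
        + ∫ θ in (0:ℝ)..Real.pi,
          Real.cos (θ / 2) / Real.sqrt (2 * a ^ 2 * (1 - Real.cos θ) + z' ^ 2) := by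
    rw [← intervalIntegral.integral_add (intgr hz (by fun_prop)) (intgr hz (by fun_prop))]
    apply intervalIntegral.integral_congr
    intro θ _
    simp only [← add_div, sub_add_cancel]
  rw [hsplit, J_eq ha hz, add_assoc, K_eq ha hz]
end

section
/- Suppose h : ℝ → ℝ is continuous with h(φ′) bounded, and define for ε > 0, I(ε) = ∫_{−δ/2}^{δ/2} ∫_{−δ/2}^{δ/2} (1 + |φ′|/δ) · (a²(φ−φ′)² − 2εa)/(a²(φ−φ′)² + ε²) dφ dφ′. Then lim_{ε→0⁺} I(ε) = (δ − 2π) · ∫_{−δ/2}^{δ/2} (1 + |φ′|/δ) dφ′ = (δ − 2π) · (5δ/4). -/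
open MeasureTheory Real Filter

lemma my_inner_eq (δ a ε c : ℝ) (ha : 0 < a) (hε : 0 < ε) :
    (∫ φ in (-δ/2)..(δ/2),
        (a ^ 2 * (φ - c) ^ 2 - 2 * ε * a) / (a ^ 2 * (φ - c) ^ 2 + ε ^ 2))
      = δ - ((ε + 2*a)/a) * (arctan (a*(δ/2 - c)/ε) + arctan (a*(δ/2 + c)/ε)) := by
  have hεne : ε ≠ 0 := hε.ne'
  have hane : a ≠ 0 := ha.ne'
  have hden : ∀ φ : ℝ, a ^ 2 * (φ - c) ^ 2 + ε ^ 2 ≠ 0 := fun φ =>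
    (by positivity : (0:ℝ) < a ^ 2 * (φ - c) ^ 2 + ε ^ 2).ne'
  have key : ∀ φ : ℝ, HasDerivAt (fun x => x - ((ε + 2*a)/a) * arctan (a*(x - c)/ε))
      ((a ^ 2 * (φ - c) ^ 2 - 2 * ε * a) / (a ^ 2 * (φ - c) ^ 2 + ε ^ 2)) φ := by
    intro φ
    have h1 : HasDerivAt (fun x : ℝ => a*(x - c)/ε) (a/ε) φ := by
      have := (((hasDerivAt_id φ).sub_const c).const_mul a).div_const ε
      simpa using this
    have h2 : HasDerivAt (fun x => arctan (a*(x - c)/ε))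
        (1 / (1 + (a*(φ - c)/ε)^2) * (a/ε)) φ :=
      (Real.hasDerivAt_arctan _).comp φ h1
    have h3 : HasDerivAt (fun x => x - ((ε + 2*a)/a) * arctan (a*(x - c)/ε))
        (1 - (ε + 2*a)/a * (1 / (1 + (a*(φ - c)/ε)^2) * (a/ε))) φ := (hasDerivAt_id' φ).sub (h2.const_mul ((ε + 2*a)/a))
    convert h3 using 1
    have h4 : 1 + (a*(φ - c)/ε)^2 ≠ 0 := by positivity
    field_simp
    ring
  rw [intervalIntegral.integral_eq_sub_of_hasDerivAt (fun φ _ => key φ) ?_]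
  · have hsign : a*(-δ/2 - c)/ε = -(a*(δ/2 + c)/ε) := by ring
    rw [hsign, Real.arctan_neg]
    ring
  · apply Continuous.intervalIntegrable
    exact ((continuous_const.mul ((continuous_id.sub continuous_const).pow 2)).sub
      continuous_const).div
      ((continuous_const.mul ((continuous_id.sub continuous_const).pow 2)).add continuous_const)
      hden

lemma my_int_abs (c : ℝ) (hc : 0 < c) : ∫ x in (-c)..c, |x| = c^2 := by
  have hi1 : IntervalIntegrable (fun x : ℝ => |x|) volume (-c) 0 :=
    continuous_abs.intervalIntegrable _ _
  have hi2 : IntervalIntegrable (fun x : ℝ => |x|) volume 0 c :=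
    continuous_abs.intervalIntegrable _ _
  rw [← intervalIntegral.integral_add_adjacent_intervals hi1 hi2]
  have e1 : (∫ x in (-c)..(0:ℝ), |x|) = ∫ x in (-c)..(0:ℝ), -x := by
    apply intervalIntegral.integral_congr
    intro x hx
    rw [Set.uIcc_of_le (by linarith)] at hx
    exact abs_of_nonpos hx.2
  have e2 : (∫ x in (0:ℝ)..c, |x|) = ∫ x in (0:ℝ)..c, x := by
    apply intervalIntegral.integral_congr
    intro x hx
    rw [Set.uIcc_of_le (by linarith)] at hx
    exact abs_of_nonneg hx.1
  rw [e1, e2, intervalIntegral.integral_neg]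
  simp
  ring

lemma my_arctan_lim (c : ℝ) (hc : 0 < c) :
    Tendsto (fun ε : ℝ => arctan (c/ε)) (nhdsWithin 0 (Set.Ioi 0)) (nhds (π/2)) := by
  have h1 : Tendsto (fun ε : ℝ => c/ε) (nhdsWithin 0 (Set.Ioi 0)) atTop := by
    have := tendsto_inv_nhdsGT_zero.const_mul_atTop hc
    simpa [div_eq_mul_inv] using this
  exact (Real.tendsto_arctan_atTop.mono_right nhdsWithin_le_nhds).comp h1

/-- Double-integral limit with the weight `1 + |φ′|/δ`:
`lim_{ε→0⁺} ∫∫ (1 + |φ′|/δ)(a²(φ−φ′)² − 2εa)/(a²(φ−φ′)² + ε²) dφ dφ′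
  = (δ − 2π)·(5δ/4)`. -/
theorem stmt16 (δ a : ℝ) (hδ : 0 < δ) (hδπ : δ < Real.pi) (ha : 0 < a)
    (h : ℝ → ℝ) (hcont : Continuous h) (hbdd : ∃ M, ∀ x, |h x| ≤ M) :
    Tendsto (fun ε : ℝ => ∫ φ' in (-δ/2)..(δ/2), ∫ φ in (-δ/2)..(δ/2),
        (1 + |φ'| / δ) * ((a ^ 2 * (φ - φ') ^ 2 - 2 * ε * a)
          / (a ^ 2 * (φ - φ') ^ 2 + ε ^ 2)))
      (nhdsWithin 0 (Set.Ioi 0)) (nhds ((δ - 2 * Real.pi) * (5 * δ / 4))) := by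
  have hane : a ≠ 0 := ha.ne'
  set F : ℝ → ℝ → ℝ := fun ε φ' => (1 + |φ'| / δ) *
      (δ - ((ε + 2*a)/a) * (arctan (a*(δ/2 - φ')/ε) + arctan (a*(δ/2 + φ')/ε))) with hF
  -- Step 1: for ε > 0 the double integral equals the single integral of F ε
  have heq : ∀ᶠ ε in nhdsWithin (0:ℝ) (Set.Ioi 0),
      (∫ φ' in (-δ/2)..(δ/2), ∫ φ in (-δ/2)..(δ/2),
        (1 + |φ'| / δ) * ((a ^ 2 * (φ - φ') ^ 2 - 2 * ε * a)
          / (a ^ 2 * (φ - φ') ^ 2 + ε ^ 2)))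
        = ∫ φ' in (-δ/2)..(δ/2), F ε φ' := by
    filter_upwards [self_mem_nhdsWithin] with ε hε
    apply intervalIntegral.integral_congr
    intro φ' _
    simp only [hF]
    rw [intervalIntegral.integral_const_mul, my_inner_eq δ a ε φ' ha hε]
  -- Step 2: dominated convergence
  have hDC : Tendsto (fun ε => ∫ φ' in (-δ/2)..(δ/2), F ε φ')
      (nhdsWithin 0 (Set.Ioi 0))
      (nhds (∫ φ' in (-δ/2)..(δ/2), (1 + |φ'|/δ) * (δ - 2*π))) := by
    apply intervalIntegral.tendsto_integral_filter_of_dominated_convergence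
      (bound := fun φ' => (1 + |φ'|/δ) * (δ + 3*π))
    · filter_upwards with ε
      apply Continuous.aestronglyMeasurable
      simp only [hF]
      exact (continuous_const.add (continuous_abs.div_const δ)).mul
        (continuous_const.sub (continuous_const.mul
          ((Real.continuous_arctan.comp (by fun_prop)).add
            (Real.continuous_arctan.comp (by fun_prop)))))
    · filter_upwards [Ioo_mem_nhdsGT_of_mem (Set.left_mem_Ico.mpr ha)] with ε hε
      apply Filter.Eventually.of_forall
      intro φ' _
      have hε0 : 0 < ε := hε.1
      have hεa : ε < a := hε.2
      have hk0 : 0 < (ε + 2*a)/a := by positivity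
      have hk3 : (ε + 2*a)/a ≤ 3 := by
        rw [div_le_iff₀ ha]; linarith
      have hS : |arctan (a*(δ/2 - φ')/ε) + arctan (a*(δ/2 + φ')/ε)| ≤ π := by
        calc |arctan (a*(δ/2 - φ')/ε) + arctan (a*(δ/2 + φ')/ε)|
            ≤ |arctan (a*(δ/2 - φ')/ε)| + |arctan (a*(δ/2 + φ')/ε)| := abs_add_le _ _
          _ ≤ π/2 + π/2 := by
              gcongr <;>
                exact abs_le.mpr ⟨(Real.neg_pi_div_two_lt_arctan _).le,
                  (Real.arctan_lt_pi_div_two _).le⟩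
          _ = π := by ring
      have hw : (0:ℝ) ≤ 1 + |φ'|/δ := by positivity
      simp only [hF, Real.norm_eq_abs, abs_mul, abs_of_nonneg hw]
      refine mul_le_mul_of_nonneg_left ?_ hw
      calc |δ - (ε + 2*a)/a * (arctan (a*(δ/2 - φ')/ε) + arctan (a*(δ/2 + φ')/ε))|
          ≤ |δ| + |(ε + 2*a)/a * (arctan (a*(δ/2 - φ')/ε) + arctan (a*(δ/2 + φ')/ε))| :=
            abs_sub _ _
        _ ≤ δ + 3*π := by
            rw [abs_of_pos hδ, abs_mul, abs_of_pos hk0]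
            have := mul_le_mul hk3 hS (abs_nonneg _) (by norm_num)
            linarith
    · exact ((continuous_const.add (continuous_abs.div_const δ)).mul
        continuous_const).intervalIntegrable _ _
    · have hne : ∀ᵐ x : ℝ, x ≠ δ/2 := by
        rw [ae_iff]
        have hset : {x : ℝ | ¬x ≠ δ/2} = {δ/2} := by ext x; simp
        rw [hset]
        exact Real.volume_singleton
      filter_upwards [hne] with φ' hneq hmem
      rw [Set.uIoc_of_le (by linarith : -δ/2 ≤ δ/2)] at hmem
      have h1 : -δ/2 < φ' := hmem.1
      have h2 : φ' < δ/2 := lt_of_le_of_ne hmem.2 hneq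
      have hk : Tendsto (fun ε : ℝ => (ε + 2*a)/a) (nhdsWithin 0 (Set.Ioi 0)) (nhds 2) := by
        have h0 : Tendsto (fun ε : ℝ => (ε + 2*a)/a) (nhds 0) (nhds ((0 + 2*a)/a)) :=
          ((continuous_id.add continuous_const).div_const a).tendsto 0
        have : (0 + 2*a)/a = 2 := by field_simp; ring
        rw [this] at h0
        exact h0.mono_left nhdsWithin_le_nhds
      have hc1 : 0 < a*(δ/2 - φ') := by nlinarith
      have hc2 : 0 < a*(δ/2 + φ') := by nlinarith
      have hlim : Tendsto (fun ε : ℝ => (1 + |φ'|/δ) *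
          (δ - (ε + 2*a)/a * (arctan (a*(δ/2 - φ')/ε) + arctan (a*(δ/2 + φ')/ε))))
          (nhdsWithin 0 (Set.Ioi 0)) (nhds ((1 + |φ'|/δ) * (δ - 2*(π/2 + π/2)))) :=
        (tendsto_const_nhds.sub
          (hk.mul ((my_arctan_lim _ hc1).add (my_arctan_lim _ hc2)))).const_mul (1 + |φ'|/δ)
      have : (1 + |φ'|/δ) * (δ - 2*(π/2 + π/2)) = (1 + |φ'|/δ) * (δ - 2*π) := by ring
      rw [this] at hlim
      simpa only [hF] using hlim
  -- Step 3: compute the limit integral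
  have hval : (∫ φ' in (-δ/2)..(δ/2), (1 + |φ'|/δ) * (δ - 2*π)) = (δ - 2*π) * (5*δ/4) := by
    rw [intervalIntegral.integral_mul_const,
      intervalIntegral.integral_add (intervalIntegrable_const)
        ((continuous_abs.div_const δ).intervalIntegrable _ _),
      intervalIntegral.integral_div, intervalIntegral.integral_const]
    have : (∫ x in (-δ/2)..(δ/2), |x|) = (δ/2)^2 := by
      have := my_int_abs (δ/2) (by linarith)
      simpa [neg_div] using this
    rw [this]
    field_simp
    ring
  rw [hval] at hDC
  exact hDC.congr' (heq.mono fun ε hε => hε.symm)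
end
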